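/- Let L ≥ 0, let c, Q, b be positive integers, let a, n be integers with gcd(a, c) = 1, and let ā denote the multiplicative inverse of a modulo c. Let q⃗ = (q₁,…,q_L) and d⃗ = (d₁,…,d_L) be L-tuples of positive integers. Assume b | Qc and assume the divisibility conditions d₁ | q₁·(Qc/b), d₂ | q₁q₂·(Qc/b)/d₁, …, d_L | q₁⋯q_L·(Qc/b)/(d₁⋯d_{L−1}) hold. Then ∑_{D | Qc} ∑*_{x mod Qc/D} e( D·x·ā / c ) · Kl_{L+1}( x, n, Qc/D ; (D, q₁,…,q_L), (b, d₁,…,d_L) ) equals Qc · Kl_L( −a, n, c ; q⃗, d⃗ ) if b = Q, and equals 0 otherwise; here the outer sum runs over positive divisors D of Qc and the inner sum over residue classes x modulo Qc/D coprime to Qc/D. -/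

import Mathlib

open Finset

/-- `e(x) = exp(2πix)`. -/
noncomputable def e (x : ℚ) : ℂ := Complex.exp (2 * Real.pi * Complex.I * (x : ℂ))

/-- The multiplicative inverse of `x` modulo `m`, realized as a natural number in `[0, m)`. -/
def minv (m x : ℕ) : ℕ := ZMod.val ((x : ZMod m)⁻¹)

/-- The modulus `M_k = q₁⋯q_k·c/(d₁⋯d_k)` (1-indexed with `M_0 = c`). -/
def Kmod {N : ℕ} (c : ℕ) (q d : Fin N → ℕ) (k : ℕ) : ℕ :=
  ((∏ j ∈ Finset.univ.filter (fun j : Fin N => (j : ℕ) < k), q j) * c) /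
    (∏ j ∈ Finset.univ.filter (fun j : Fin N => (j : ℕ) < k), d j)

/-- `xbar c q d a x k` is `a` when `k = 0` and is otherwise the multiplicative inverse
`x̄_{k-1}` of the variable `x_{k-1}` modulo its modulus `M_k = Kmod c q d k`
(here `x : Fin N → ℕ` records the summation variables `x₁, …, x_N` with 0-based indexing). -/
def xbar {N : ℕ} (c : ℕ) (q d : Fin N → ℕ) (a : ℤ) (x : Fin N → ℕ) (k : ℕ) : ℤ :=
  if h : k - 1 < N ∧ k ≠ 0 then (minv (Kmod c q d k) (x ⟨k - 1, h.1⟩) : ℤ) else a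

/-- The hyper-Kloosterman sum
`Kl_N(a,n,c;q⃗,d⃗) = ∑*_{x₁ mod q₁c/d₁} ⋯ ∑*_{x_N mod q₁⋯q_N c/(d₁⋯d_N)}
  e(d₁x₁a/c + d₂x₂x̄₁/(q₁c/d₁) + ⋯ + n x̄_N/(q₁⋯q_N c/(d₁⋯d_N)))`,
where each `x_i` runs over residues coprime to its modulus and `x̄_i` is the
multiplicative inverse of `x_i` modulo `q₁⋯q_i c/(d₁⋯d_i)`.
For `N = 0` this is `e(an/c)`. -/
noncomputable def Kl {N : ℕ} (a n : ℤ) (c : ℕ) (q d : Fin N → ℕ) : ℂ :=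
  ∑ x ∈ Fintype.piFinset (fun i : Fin N =>
      (Finset.range (Kmod c q d ((i : ℕ) + 1))).filter
        (fun t => Nat.Coprime t (Kmod c q d ((i : ℕ) + 1)))),
    e ((∑ i : Fin N,
          ((d i : ℚ) * (x i : ℚ) * ((xbar c q d a x (i : ℕ) : ℤ) : ℚ)) /
            ((Kmod c q d (i : ℕ) : ℕ) : ℚ))
        + ((n : ℚ) * ((xbar c q d a x N : ℤ) : ℚ)) / ((Kmod c q d N : ℕ) : ℚ))

lemma e_add (x y : ℚ) : e (x + y) = e x * e y := by
  simp only [e, ← Complex.exp_add]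
  push_cast
  ring_nf

lemma e_int (k : ℤ) : e (k : ℚ) = 1 := by
  simp only [e]
  rw [show ((2:ℂ) * Real.pi * Complex.I * ((k:ℚ) : ℂ)) = (k : ℂ) * (2 * Real.pi * Complex.I) by
    push_cast; ring]
  exact Complex.exp_int_mul_two_pi_mul_I k

lemma e_eq_of_sub_int {x y : ℚ} (k : ℤ) (h : x - y = (k : ℚ)) : e x = e y := by
  have : x = y + (k : ℚ) := by linarith
  rw [this, e_add, e_int, mul_one]

lemma e_pow (x : ℚ) (m : ℕ) : e x ^ m = e (m * x) := by
  simp only [e, ← Complex.exp_nat_mul]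
  push_cast
  ring_nf

lemma e_eq_one_iff {x : ℚ} : e x = 1 ↔ ∃ k : ℤ, x = k := by
  simp only [e, Complex.exp_eq_one_iff]
  constructor
  · rintro ⟨k, hk⟩
    refine ⟨k, ?_⟩
    have h2 : (2 * (Real.pi:ℂ) * Complex.I) ≠ 0 := by
      exact mul_ne_zero (mul_ne_zero two_ne_zero
        (Complex.ofReal_ne_zero.mpr Real.pi_ne_zero)) Complex.I_ne_zero
    have hx : ((x:ℚ):ℂ) = (k:ℂ) := by
      apply mul_left_cancel₀ h2
      rw [hk]; ring
    exact_mod_cast hx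
  · rintro ⟨k, hk⟩
    exact ⟨k, by rw [hk]; push_cast; ring⟩

lemma sum_e_range (M : ℕ) (hM : 0 < M) (t : ℤ) :
    ∑ y ∈ Finset.range M, e ((y : ℚ) * (t : ℚ) / (M : ℚ)) =
      if (M : ℤ) ∣ t then (M : ℂ) else 0 := by
  have hMQ : (M : ℚ) ≠ 0 := by positivity
  have hz : ∀ y : ℕ, e ((y : ℚ) * (t : ℚ) / (M : ℚ)) = e ((t : ℚ) / M) ^ y := by
    intro y; rw [e_pow]; ring_nf
  simp only [hz]
  by_cases hdvd : (M : ℤ) ∣ t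
  · have : e ((t:ℚ)/M) = 1 := by
      obtain ⟨k, rfl⟩ := hdvd
      rw [e_eq_one_iff]
      exact ⟨k, by push_cast; field_simp⟩
    rw [if_pos hdvd]
    simp [this]
  · have hne : e ((t:ℚ)/M) ≠ 1 := by
      rw [Ne, e_eq_one_iff]
      rintro ⟨k, hk⟩
      apply hdvd
      refine ⟨k, ?_⟩
      have : (t : ℚ) = M * k := by field_simp at hk; linarith
      exact_mod_cast this
    rw [if_neg hdvd, geom_sum_eq hne]
    have : e ((t:ℚ)/M) ^ M = 1 := by
      rw [e_pow]
      rw [show (M : ℚ) * ((t:ℚ)/M) = (t : ℚ) by field_simp]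
      exact e_int t
    rw [this]
    simp

lemma sum_divisors_e (M : ℕ) (hM : 0 < M) (t : ℤ) :
    ∑ D ∈ M.divisors, ∑ x ∈ (Finset.range (M / D)).filter (fun x => Nat.Coprime x (M / D)),
        e ((x : ℚ) * (t : ℚ) / ((M / D : ℕ) : ℚ)) =
      if (M : ℤ) ∣ t then (M : ℂ) else 0 := by
  rw [← sum_e_range M hM t, Finset.sum_sigma']
  refine Finset.sum_nbij' (fun p => p.1 * p.2) (fun y => ⟨Nat.gcd y M, y / Nat.gcd y M⟩)
    ?_ ?_ ?_ ?_ ?_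
  · rintro ⟨D, x⟩ hp
    simp only [Finset.mem_sigma, Nat.mem_divisors, Finset.mem_filter, Finset.mem_range] at hp
    obtain ⟨⟨hDdvd, -⟩, hx, -⟩ := hp
    have hD0 : 0 < D := Nat.pos_of_dvd_of_pos hDdvd hM
    simp only [Finset.mem_range]
    calc D * x < D * (M / D) := by exact (mul_lt_mul_iff_right₀ hD0).mpr hx
    _ = M := Nat.mul_div_cancel' hDdvd
  · intro y hy
    simp only [Finset.mem_range] at hy
    have hg : Nat.gcd y M ∣ M := Nat.gcd_dvd_right y M
    have hg0 : 0 < Nat.gcd y M := Nat.gcd_pos_of_pos_right y hM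
    simp only [Finset.mem_sigma, Nat.mem_divisors, Finset.mem_filter, Finset.mem_range]
    refine ⟨⟨hg, hM.ne'⟩, ?_, Nat.coprime_div_gcd_div_gcd hg0⟩
    exact Nat.div_lt_div_of_lt_of_dvd hg hy
  · rintro ⟨D, x⟩ hp
    simp only [Finset.mem_sigma, Nat.mem_divisors, Finset.mem_filter, Finset.mem_range] at hp
    obtain ⟨⟨hDdvd, -⟩, hx, hcop⟩ := hp
    have hD0 : 0 < D := Nat.pos_of_dvd_of_pos hDdvd hM
    have hgcd : Nat.gcd (D * x) M = D := by
      conv_lhs => rw [← Nat.mul_div_cancel' hDdvd, Nat.gcd_mul_left]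
      rw [Nat.Coprime.gcd_eq_one hcop, mul_one]
    show (⟨Nat.gcd (D * x) M, (D * x) / Nat.gcd (D * x) M⟩ : (_ : ℕ) × ℕ) = ⟨D, x⟩
    rw [hgcd, Nat.mul_div_cancel_left _ hD0]
  · intro y hy
    exact Nat.mul_div_cancel' (Nat.gcd_dvd_left y M)
  · rintro ⟨D, x⟩ hp
    simp only [Finset.mem_sigma, Nat.mem_divisors, Finset.mem_filter, Finset.mem_range] at hp
    obtain ⟨⟨hDdvd, -⟩, hx, -⟩ := hp
    have hD0 : (0:ℚ) < (D:ℚ) := by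
      exact_mod_cast Nat.pos_of_dvd_of_pos hDdvd hM
    have hMD : ((M / D : ℕ) : ℚ) = (M : ℚ) / (D : ℚ) := by
      rw [Nat.cast_div hDdvd hD0.ne']
    simp only
    congr 1
    rw [hMD]
    have hM0 : (M:ℚ) ≠ 0 := by positivity
    field_simp
    push_cast; ring
lemma Kmod_zero {N : ℕ} (c : ℕ) (q d : Fin N → ℕ) : Kmod c q d 0 = c := by
  simp [Kmod]

lemma prod_filter_lt_cons {N : ℕ} (v : ℕ) (f : Fin N → ℕ) (k : ℕ) :
    ∏ j ∈ Finset.univ.filter (fun j : Fin (N+1) => (j : ℕ) < k + 1), (Fin.cons v f) j =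
      v * ∏ j ∈ Finset.univ.filter (fun j : Fin N => (j : ℕ) < k), f j := by
  rw [Finset.prod_filter, Finset.prod_filter, Fin.prod_univ_succ]
  simp [Nat.succ_lt_succ_iff]

lemma Kmod_cons {L : ℕ} (c Q b D : ℕ) (q d : Fin L → ℕ)
    (hbQc : b ∣ Q * c) (hD : D ∣ Q * c) (k : ℕ) :
    Kmod (Q * c / D) (Fin.cons D q) (Fin.cons b d) (k + 1) = Kmod (Q * c / b) q d k := by
  unfold Kmod
  rw [prod_filter_lt_cons, prod_filter_lt_cons]
  rw [show D * (∏ j ∈ Finset.univ.filter (fun j : Fin L => (j : ℕ) < k), q j) * (Q * c / D)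
      = (∏ j ∈ Finset.univ.filter (fun j : Fin L => (j : ℕ) < k), q j) * (Q * c) by
    rw [mul_comm D, mul_assoc, Nat.mul_div_cancel' hD]]
  conv_rhs => rw [← Nat.mul_div_assoc _ hbQc, Nat.div_div_eq_div_mul]

lemma xbar_zero {N : ℕ} (c : ℕ) (q d : Fin N → ℕ) (a : ℤ) (x : Fin N → ℕ) :
    xbar c q d a x 0 = a := by
  simp [xbar]

lemma xbar_succ {N : ℕ} (c : ℕ) (q d : Fin N → ℕ) (a : ℤ) (x : Fin N → ℕ)
    (k : ℕ) (hk : k < N) :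
    xbar c q d a x (k + 1) = (minv (Kmod c q d (k + 1)) (x ⟨k, hk⟩) : ℤ) := by
  unfold xbar
  rw [dif_pos ⟨by simpa using hk, Nat.succ_ne_zero k⟩]
  rfl

lemma xbar_cons {L : ℕ} (c Q b D : ℕ) (q d : Fin L → ℕ)
    (hbQc : b ∣ Q * c) (hD : D ∣ Q * c)
    (A : ℤ) (x : Fin (L+1) → ℕ) (k : ℕ) (hk : k < L + 1) :
    xbar (Q * c / D) (Fin.cons D q) (Fin.cons b d) A x (k + 1) =
      (minv (Kmod (Q * c / b) q d k) (x ⟨k, hk⟩) : ℤ) := by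
  rw [xbar_succ _ _ _ _ _ k hk, Kmod_cons c Q b D q d hbQc hD k]

lemma Kl_congr {L : ℕ} (c : ℕ) (hc : 0 < c) (q d : Fin L → ℕ) (n a₁ a₂ : ℤ)
    (h : (c : ℤ) ∣ a₁ - a₂) : Kl a₁ n c q d = Kl a₂ n c q d := by
  obtain ⟨s, hs⟩ := h
  have hsa : a₁ = a₂ + c * s := by linarith
  have hcQ : (c : ℚ) ≠ 0 := by positivity
  have key : ∀ x : Fin L → ℕ, ∀ k, k ≠ 0 → k ≤ L →
      xbar c q d a₁ x k = xbar c q d a₂ x k := by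
    intro x k hk0 hkL
    unfold xbar
    have hcond : k - 1 < L ∧ k ≠ 0 := ⟨by omega, hk0⟩
    rw [dif_pos hcond, dif_pos hcond]
  unfold Kl
  apply Finset.sum_congr rfl
  intro x hx
  cases L with
  | zero =>
    apply e_eq_of_sub_int (n * s)
    rw [xbar_zero, xbar_zero, Kmod_zero]
    simp only [Finset.univ_eq_empty, Finset.sum_empty, zero_add]
    rw [hsa]
    push_cast
    field_simp
    ring
  | succ L' =>
    apply e_eq_of_sub_int ((d 0 : ℤ) * (x 0 : ℤ) * s)
    have e2 : xbar c q d a₁ x (L' + 1) = xbar c q d a₂ x (L' + 1) :=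
      key x _ (by omega) (by omega)
    have hsum : (∑ i : Fin L',
          ((d i.succ : ℚ) * (x i.succ : ℚ) * ((xbar c q d a₁ x (i.succ : ℕ) : ℤ) : ℚ)) /
            ((Kmod c q d (i.succ : ℕ) : ℕ) : ℚ)) = ∑ i : Fin L',
          ((d i.succ : ℚ) * (x i.succ : ℚ) * ((xbar c q d a₂ x (i.succ : ℕ) : ℤ) : ℚ)) /
            ((Kmod c q d (i.succ : ℕ) : ℕ) : ℚ) := by
      refine Finset.sum_congr rfl fun i _ => ?_
      rw [key x (i.succ : ℕ) (by simp [Fin.val_succ]) i.succ.isLt.le]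
    rw [Fin.sum_univ_succ, Fin.sum_univ_succ, hsum, e2]
    have h0 : ((0 : Fin (L' + 1)) : ℕ) = 0 := rfl
    rw [h0, xbar_zero, xbar_zero, Kmod_zero]
    rw [hsa]
    push_cast
    field_simp
    ring

def Smod (T : ℕ) {L : ℕ} (q d : Fin L → ℕ) : Finset (Fin (L + 1) → ℕ) :=
  Fintype.piFinset fun i : Fin (L + 1) =>
    (Finset.range (Kmod T q d (i : ℕ))).filter fun x => Nat.Coprime x (Kmod T q d (i : ℕ))

def Rphase (T : ℕ) {L : ℕ} (q d : Fin L → ℕ) (n : ℤ) (y : Fin (L + 1) → ℕ) : ℚ :=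
  (∑ j : Fin L, ((d j : ℚ) * (y j.succ : ℚ) *
      ((minv (Kmod T q d (j : ℕ)) (y j.castSucc) : ℕ) : ℚ)) /
      ((Kmod T q d (j : ℕ) : ℕ) : ℚ))
    + ((n : ℚ) * ((minv (Kmod T q d L) (y (Fin.last L)) : ℕ) : ℚ)) /
        ((Kmod T q d L : ℕ) : ℚ)

lemma Kl_cons_eq {L : ℕ} (c Q b D : ℕ) (q d : Fin L → ℕ)
    (hbQc : b ∣ Q * c) (hD : D ∣ Q * c) (n : ℤ) (X : ℕ) :
    Kl (X : ℤ) n (Q * c / D) (Fin.cons D q) (Fin.cons b d) =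
      ∑ y ∈ Smod (Q * c / b) q d,
        e ((b : ℚ) * (y 0 : ℚ) * (X : ℚ) / ((Q * c / D : ℕ) : ℚ)) *
          e (Rphase (Q * c / b) q d n y) := by
  unfold Kl Smod
  refine Finset.sum_congr ?_ fun y hy => ?_
  · congr 1
    funext i
    rw [Kmod_cons c Q b D q d hbQc hD]
  · rw [← e_add]
    congr 1
    rw [Fin.sum_univ_succ, add_assoc]
    congr 1
    · have h0 : ((0 : Fin (L + 1)) : ℕ) = 0 := rfl
      rw [h0, xbar_zero, Kmod_zero, Fin.cons_zero]
      push_cast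
      ring
    · unfold Rphase
      congr 1
      · refine Finset.sum_congr rfl fun j _ => ?_
        rw [Fin.val_succ, xbar_cons c Q b D q d hbQc hD X y (j : ℕ) (by omega),
          Kmod_cons c Q b D q d hbQc hD, Fin.cons_succ]
        rfl
      · rw [xbar_cons c Q b D q d hbQc hD X y L (by omega),
          Kmod_cons c Q b D q d hbQc hD]
        rfl

lemma cons_minv_eq_xbar {L : ℕ} (c : ℕ) (q d : Fin L → ℕ) (v : ℕ) (z : Fin L → ℕ)
    (k : ℕ) (hk : k < L + 1) :
    ((minv (Kmod c q d k) ((Fin.cons v z : Fin (L + 1) → ℕ) ⟨k, hk⟩) : ℕ) : ℤ) =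
      xbar c q d ((minv c v : ℕ) : ℤ) z k := by
  cases k with
  | zero => rw [xbar_zero, Kmod_zero]; rfl
  | succ k' =>
    have hk' : k' < L := by omega
    rw [xbar_succ c q d _ z k' hk',
      show ((Fin.cons v z : Fin (L + 1) → ℕ) ⟨k' + 1, hk⟩) = z ⟨k', hk'⟩ from
        Fin.cons_succ (α := fun _ : Fin (L + 1) => ℕ) v z ⟨k', hk'⟩]

lemma sum_Rphase_cons {L : ℕ} (c : ℕ) (q d : Fin L → ℕ) (n : ℤ) (v : ℕ) :
    ∑ z ∈ Fintype.piFinset (fun i : Fin L =>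
        (Finset.range (Kmod c q d ((i : ℕ) + 1))).filter
          (fun t => Nat.Coprime t (Kmod c q d ((i : ℕ) + 1)))),
      e (Rphase c q d n (Fin.cons v z)) = Kl ((minv c v : ℕ) : ℤ) n c q d := by
  unfold Kl
  apply Finset.sum_congr rfl
  intro z hz
  congr 1
  unfold Rphase
  congr 1
  · refine Finset.sum_congr rfl fun j _ => ?_
    rw [Fin.cons_succ]
    have := cons_minv_eq_xbar c q d v z (j : ℕ) (by omega)
    rw [show ((Fin.cons v z : Fin (L + 1) → ℕ) j.castSucc)
        = (Fin.cons v z : Fin (L + 1) → ℕ) ⟨(j : ℕ), by omega⟩ from rfl, ← this]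
    push_cast
    ring
  · have := cons_minv_eq_xbar c q d v z L (by omega)
    rw [show ((Fin.cons v z : Fin (L + 1) → ℕ) (Fin.last L))
        = (Fin.cons v z : Fin (L + 1) → ℕ) ⟨L, by omega⟩ from rfl, ← this]
    push_cast
    ring

lemma no_solution (c Q b : ℕ) (hc : 0 < c) (hQ : 0 < Q) (hb : 0 < b)
    (abar : ℤ) (hco : IsCoprime abar (c : ℤ))
    (hbQc : b ∣ Q * c) (hbQ : b ≠ Q) (x : ℕ) (hx : Nat.Coprime x (Q * c / b)) :
    ¬ (((Q * c : ℕ) : ℤ) ∣ (Q : ℤ) * abar + (b : ℤ) * (x : ℕ)) := by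
  intro H
  have hbM : (b : ℤ) ∣ (Q : ℤ) * (c : ℤ) := by exact_mod_cast hbQc
  have H' : ((Q : ℤ) * (c : ℤ)) ∣ (Q : ℤ) * abar + (b : ℤ) * (x : ℕ) := by
    exact_mod_cast H
  have h1 : (b : ℤ) ∣ (Q : ℤ) * abar := by
    have h2 := dvd_sub (hbM.trans H') (dvd_mul_right (b : ℤ) (x : ℕ))
    simpa using h2
  set g := Nat.gcd b Q with hgdef
  have hg0 : 0 < g := Nat.gcd_pos_of_pos_left Q hb
  have hbg : g * (b / g) = b := Nat.mul_div_cancel' (Nat.gcd_dvd_left b Q)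
  have hQg : g * (Q / g) = Q := Nat.mul_div_cancel' (Nat.gcd_dvd_right b Q)
  set b₁ := b / g with hb1def
  set Q₁ := Q / g with hQ1def
  have hco1 : Nat.Coprime b₁ Q₁ := Nat.coprime_div_gcd_div_gcd hg0
  have hgZ : (g : ℤ) ≠ 0 := by exact_mod_cast hg0.ne'
  have hb1Q1 : (b₁ : ℤ) ∣ (Q₁ : ℤ) * abar := by
    have : ((g : ℤ) * b₁) ∣ ((g : ℤ) * Q₁) * abar := by
      rw [show ((g:ℤ) * b₁) = ((b:ℕ):ℤ) by exact_mod_cast hbg,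
        show ((g:ℤ) * Q₁) = ((Q:ℕ):ℤ) by exact_mod_cast hQg]
      exact h1
    rw [mul_assoc] at this
    exact (mul_dvd_mul_iff_left hgZ).mp this
  have hcop1Z : IsCoprime (b₁ : ℤ) (Q₁ : ℤ) := by
    rw [Int.isCoprime_iff_gcd_eq_one]
    simpa using hco1
  have hb1a : (b₁ : ℤ) ∣ abar := hcop1Z.dvd_of_dvd_mul_left hb1Q1
  have hb1c : b₁ ∣ c := by
    have h3 : g * b₁ ∣ (g * Q₁) * c := by
      rw [hbg, hQg]; exact hbQc
    rw [mul_assoc] at h3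
    exact hco1.dvd_of_dvd_mul_left ((Nat.mul_dvd_mul_iff_left hg0).mp h3)
  have hb1unit : IsUnit (b₁ : ℤ) :=
    hco.isUnit_of_dvd' hb1a (by exact_mod_cast hb1c)
  have hb11 : b₁ = 1 := by
    rcases Int.isUnit_iff.mp hb1unit with h | h
    · exact_mod_cast h
    · exfalso
      have h8 := Int.natCast_nonneg b₁
      rw [h] at h8
      norm_num at h8
  have hbdvdQ : b ∣ Q := by
    rw [← hbg, hb11, mul_one]
    exact Nat.gcd_dvd_right b Q
  set Q₂ := Q / b with hQ2def
  have hQ2 : b * Q₂ = Q := Nat.mul_div_cancel' hbdvdQ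
  have hT : Q * c / b = Q₂ * c := by
    rw [← hQ2, mul_assoc, Nat.mul_div_cancel_left _ hb]
  have hbZ : (b : ℤ) ≠ 0 := by exact_mod_cast hb.ne'
  have H2 : ((Q₂ : ℤ) * c) ∣ (Q₂ : ℤ) * abar + (x : ℕ) := by
    have hH3 : ((b : ℤ) * ((Q₂ : ℤ) * c)) ∣ (b : ℤ) * ((Q₂ : ℤ) * abar + (x : ℕ)) := by
      have e1 : ((b:ℤ) * ((Q₂:ℤ) * c)) = (Q:ℤ) * c := by
        push_cast [← hQ2]; ring
      have e2 : ((b:ℤ) * ((Q₂:ℤ) * abar + (x:ℕ))) = (Q:ℤ) * abar + (b:ℤ) * (x:ℕ) := by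
        push_cast [← hQ2]; ring
      rw [e1, e2]; exact H'
    exact (mul_dvd_mul_iff_left hbZ).mp hH3
  have hQ2x : Q₂ ∣ x := by
    have h4 : (Q₂ : ℤ) ∣ (x : ℕ) := by
      have h5 := dvd_sub ((dvd_mul_right (Q₂:ℤ) (c:ℤ)).trans H2) (dvd_mul_right (Q₂:ℤ) abar)
      simpa using h5
    exact_mod_cast h4
  have hxQ2 : Nat.Coprime x Q₂ := by
    rw [hT] at hx
    exact Nat.Coprime.coprime_dvd_right (dvd_mul_right Q₂ c) hx
  have hQ21 : Q₂ = 1 := by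
    have := Nat.dvd_gcd hQ2x dvd_rfl
    rw [Nat.gcd_comm] at this
    have h6 : Q₂ ∣ 1 := by
      have h7 : Nat.gcd x Q₂ = 1 := hxQ2
      calc Q₂ ∣ Nat.gcd x Q₂ := Nat.dvd_gcd hQ2x dvd_rfl
      _ = 1 := h7
      -- fallback
    exact Nat.eq_one_of_dvd_one h6
  apply hbQ
  rw [← hQ2, hQ21, mul_one]

lemma stepA {L : ℕ} (c Q b : ℕ) (hc : 0 < c) (hQ : 0 < Q) (hb : 0 < b)
    (abar n : ℤ) (q d : Fin L → ℕ) (hbQc : b ∣ Q * c) :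
    (∑ D ∈ (Q * c).divisors,
        ∑ x ∈ (Finset.range (Q * c / D)).filter (fun t => Nat.Coprime t (Q * c / D)),
          e (((D : ℚ) * (x : ℚ) * (abar : ℚ)) / (c : ℚ)) *
            Kl ((x : ℕ) : ℤ) n (Q * c / D) (Fin.cons D q) (Fin.cons b d)) =
      ∑ y ∈ Smod (Q * c / b) q d,
        e (Rphase (Q * c / b) q d n y) *
          (if ((Q * c : ℕ) : ℤ) ∣ (Q : ℤ) * abar + (b : ℤ) * ((y 0 : ℕ) : ℤ)
            then ((Q * c : ℕ) : ℂ) else 0) := by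
  have hM0 : 0 < Q * c := Nat.mul_pos hQ hc
  have h1 : ∀ D ∈ (Q * c).divisors,
      (∑ x ∈ (Finset.range (Q * c / D)).filter (fun t => Nat.Coprime t (Q * c / D)),
        e (((D : ℚ) * (x : ℚ) * (abar : ℚ)) / (c : ℚ)) *
          Kl ((x : ℕ) : ℤ) n (Q * c / D) (Fin.cons D q) (Fin.cons b d))
      = ∑ y ∈ Smod (Q * c / b) q d,
          ∑ x ∈ (Finset.range (Q * c / D)).filter (fun t => Nat.Coprime t (Q * c / D)),
            e (Rphase (Q * c / b) q d n y) *
              e ((x : ℚ) * ((((Q : ℤ) * abar + (b : ℤ) * ((y 0 : ℕ) : ℤ)) : ℤ) : ℚ) /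
                ((Q * c / D : ℕ) : ℚ)) := by
    intro D hD
    obtain ⟨hDdvd, -⟩ := Nat.mem_divisors.mp hD
    rw [Finset.sum_comm]
    refine Finset.sum_congr rfl fun x hx => ?_
    rw [Kl_cons_eq c Q b D q d hbQc hDdvd n x, Finset.mul_sum]
    refine Finset.sum_congr rfl fun y hy => ?_
    have hD0 : 0 < D := Nat.pos_of_dvd_of_pos hDdvd hM0
    have hm0 : 0 < Q * c / D := Nat.div_pos (Nat.le_of_dvd hM0 hDdvd) hD0
    have hmne : ((Q * c / D : ℕ) : ℚ) ≠ 0 := by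
      exact_mod_cast hm0.ne'
    have hcne : (c : ℚ) ≠ 0 := by positivity
    have hDm : (D : ℚ) * ((Q * c / D : ℕ) : ℚ) = (Q : ℚ) * (c : ℚ) := by
      exact_mod_cast congrArg (Nat.cast : ℕ → ℚ) (Nat.mul_div_cancel' hDdvd)
    calc e ((D : ℚ) * (x : ℚ) * (abar : ℚ) / (c : ℚ)) *
          (e ((b : ℚ) * (y 0 : ℚ) * (x : ℚ) / ((Q * c / D : ℕ) : ℚ)) *
            e (Rphase (Q * c / b) q d n y))
        = e (Rphase (Q * c / b) q d n y) *
            e ((D : ℚ) * (x : ℚ) * (abar : ℚ) / (c : ℚ) +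
              (b : ℚ) * (y 0 : ℚ) * (x : ℚ) / ((Q * c / D : ℕ) : ℚ)) := by
          rw [e_add]; ring
      _ = e (Rphase (Q * c / b) q d n y) *
            e ((x : ℚ) * ((((Q : ℤ) * abar + (b : ℤ) * ((y 0 : ℕ) : ℤ)) : ℤ) : ℚ) /
              ((Q * c / D : ℕ) : ℚ)) := by
          congr 1
          congr 1
          push_cast
          field_simp
          linear_combination ((x : ℚ) * (abar : ℚ)) * hDm
  rw [Finset.sum_congr rfl h1, Finset.sum_comm]
  refine Finset.sum_congr rfl fun y hy => ?_
  simp only [← Finset.mul_sum]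
  congr 1
  exact sum_divisors_e (Q * c) hM0 _

/-- **Collapsing a divisor sum of hyper-Kloosterman sums (one step).**
Let `L ≥ 0`, let `c, Q, b` be positive integers, `a, n` integers with `gcd(a,c) = 1` and
`ā` a multiplicative inverse of `a` mod `c`.  Let `q⃗, d⃗` be `L`-tuples of positive
integers with `b ∣ Qc` and `d₁ ∣ q₁·(Qc/b)`, `d₂ ∣ q₁q₂·(Qc/b)/d₁`, ….  Then
`∑_{D ∣ Qc} ∑*_{x mod Qc/D} e(Dxā/c) · Kl_{L+1}(x, n, Qc/D; (D,q₁,…,q_L),(b,d₁,…,d_L))`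
equals `Qc · Kl_L(-a, n, c; q⃗, d⃗)` if `b = Q`, and `0` otherwise. -/
theorem hyperKloosterman_divisor_sum_collapse
    (L : ℕ) (c Q b : ℕ) (hc : 0 < c) (hQ : 0 < Q) (hb : 0 < b)
    (a n : ℤ) (ha : Int.gcd a (c : ℤ) = 1)
    (abar : ℤ) (habar : a * abar ≡ 1 [ZMOD (c : ℤ)])
    (q d : Fin L → ℕ) (hq : ∀ i, 0 < q i) (hd : ∀ i, 0 < d i)
    (hbQc : b ∣ Q * c)
    (hdiv : ∀ i : Fin L,
      (∏ j ∈ Finset.Iic i, d j) ∣ (∏ j ∈ Finset.Iic i, q j) * (Q * c / b)) :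
    (∑ D ∈ (Q * c).divisors,
        ∑ x ∈ (Finset.range (Q * c / D)).filter (fun t => Nat.Coprime t (Q * c / D)),
          e (((D : ℚ) * (x : ℚ) * (abar : ℚ)) / (c : ℚ)) *
            Kl ((x : ℕ) : ℤ) n (Q * c / D) (Fin.cons D q) (Fin.cons b d)) =
      if b = Q then ((Q * c : ℕ) : ℂ) * Kl (-a) n c q d else 0 := by
  classical
  have hM0 : 0 < Q * c := Nat.mul_pos hQ hc
  haveI : NeZero c := ⟨hc.ne'⟩
  have hcoab : IsCoprime abar (c : ℤ) := by
    obtain ⟨k, hk⟩ := habar.dvd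
    exact ⟨a, k, by linarith⟩
  rw [stepA c Q b hc hQ hb abar n q d hbQc]
  by_cases hbQ : b = Q
  · subst hbQ
    rw [if_pos rfl]
    have hT : b * c / b = c := Nat.mul_div_cancel_left c hb
    rw [hT]
    have hmab : ((a : ZMod c)) * ((abar : ZMod c)) = 1 := by
      have h := (ZMod.intCast_eq_intCast_iff _ _ _).mpr habar
      push_cast at h
      exact h
    set V := ZMod.val ((-abar : ℤ) : ZMod c) with hVdef
    have hVlt : V < c := ZMod.val_lt _
    have hVcast : ((V : ℕ) : ZMod c) = ((-abar : ℤ) : ZMod c) := by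
      rw [hVdef]
      simp [ZMod.natCast_val, ZMod.cast_id]
    have hVmul : ((V : ℕ) : ZMod c) * ((-a : ℤ) : ZMod c) = 1 := by
      rw [hVcast]
      push_cast
      linear_combination hmab
    have hVcop : Nat.Coprime V c := by
      rw [← ZMod.isUnit_iff_coprime]
      exact IsUnit.of_mul_eq_one _ hVmul
    have hminv : ((minv c V : ℕ) : ZMod c) = ((-a : ℤ) : ZMod c) := by
      have hinv : ((V : ℕ) : ZMod c)⁻¹ = ((-a : ℤ) : ZMod c) :=
        ZMod.inv_eq_of_mul_eq_one c _ _ hVmul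
      rw [minv, ZMod.natCast_val, ZMod.cast_id, hinv]
    have hdvdminv : (c : ℤ) ∣ ((minv c V : ℕ) : ℤ) - (-a) := by
      rw [← ZMod.intCast_zmod_eq_zero_iff_dvd]
      push_cast
      rw [show (((minv c V : ℕ) : ZMod c) : ZMod c) = ((-a : ℤ) : ZMod c) from hminv]
      push_cast
      ring
    have hcond : ∀ y ∈ Smod c q d,
        ((((b * c : ℕ) : ℤ) ∣ (b : ℤ) * abar + (b : ℤ) * ((y 0 : ℕ) : ℤ)) ↔ y 0 = V) := by
      intro y hy
      have hy0 := Fintype.mem_piFinset.mp hy 0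
      rw [show ((0 : Fin (L + 1)) : ℕ) = 0 from rfl, Kmod_zero] at hy0
      rw [Finset.mem_filter, Finset.mem_range] at hy0
      have h1 : (((b * c : ℕ) : ℤ) ∣ (b : ℤ) * abar + (b : ℤ) * ((y 0 : ℕ) : ℤ)) ↔
          ((c : ℤ) ∣ abar + ((y 0 : ℕ) : ℤ)) := by
        push_cast
        rw [← mul_add]
        exact mul_dvd_mul_iff_left (show (b : ℤ) ≠ 0 by exact_mod_cast hb.ne')
      have h2 : ((c : ℤ) ∣ abar + ((y 0 : ℕ) : ℤ)) ↔
          (((y 0 : ℕ) : ZMod c) = ((-abar : ℤ) : ZMod c)) := by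
        rw [← ZMod.intCast_zmod_eq_zero_iff_dvd]
        push_cast
        constructor
        · intro h
          linear_combination h
        · intro h
          linear_combination h
      have h3 : (((y 0 : ℕ) : ZMod c) = ((-abar : ℤ) : ZMod c)) ↔ y 0 = V := by
        constructor
        · intro h
          have h4 := congrArg ZMod.val h
          rwa [ZMod.val_cast_of_lt hy0.1] at h4
        · intro h
          rw [h, hVcast]
      exact h1.trans (h2.trans h3)
    calc (∑ y ∈ Smod c q d,
            e (Rphase c q d n y) *
              (if ((b * c : ℕ) : ℤ) ∣ (b : ℤ) * abar + (b : ℤ) * ((y 0 : ℕ) : ℤ)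
                then ((b * c : ℕ) : ℂ) else 0))
        = ∑ y ∈ Smod c q d,
            (if y 0 = V then e (Rphase c q d n y) * ((b * c : ℕ) : ℂ) else 0) := by
          refine Finset.sum_congr rfl fun y hy => ?_
          rw [mul_ite, mul_zero]
          congr 1
          · exact propext (hcond y hy)
      _ = ∑ y ∈ (Smod c q d).filter (fun y => y 0 = V),
            e (Rphase c q d n y) * ((b * c : ℕ) : ℂ) := (Finset.sum_filter _ _).symm
      _ = ∑ z ∈ Fintype.piFinset (fun i : Fin L =>
            (Finset.range (Kmod c q d ((i : ℕ) + 1))).filter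
              (fun t => Nat.Coprime t (Kmod c q d ((i : ℕ) + 1)))),
            e (Rphase c q d n (Fin.cons V z)) * ((b * c : ℕ) : ℂ) := by
          refine Finset.sum_nbij' (fun y => Fin.tail y) (fun z => Fin.cons V z)
            ?_ ?_ ?_ ?_ ?_
          · intro y hy
            rw [Finset.mem_filter] at hy
            refine Fintype.mem_piFinset.mpr fun i => ?_
            have := Fintype.mem_piFinset.mp hy.1 i.succ
            rw [show ((i.succ : Fin (L + 1)) : ℕ) = (i : ℕ) + 1 from Fin.val_succ i] at this
            exact this
          · intro z hz
            rw [Finset.mem_filter]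
            constructor
            · refine Fintype.mem_piFinset.mpr fun i => ?_
              refine Fin.cases ?_ ?_ i
              · simp only [Fin.cons_zero]
                rw [show (((0 : Fin (L + 1)) : Fin (L + 1)) : ℕ) = 0 from rfl, Kmod_zero]
                rw [Finset.mem_filter, Finset.mem_range]
                exact ⟨hVlt, hVcop⟩
              · intro j
                simp only [Fin.cons_succ, Fin.val_succ]
                exact Fintype.mem_piFinset.mp hz j
            · simp
          · intro y hy
            rw [Finset.mem_filter] at hy
            rw [← hy.2]
            exact Fin.cons_self_tail y
          · intro z hz
            simp
          · intro y hy
            rw [Finset.mem_filter] at hy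
            rw [← hy.2, Fin.cons_self_tail y]
      _ = (∑ z ∈ Fintype.piFinset (fun i : Fin L =>
            (Finset.range (Kmod c q d ((i : ℕ) + 1))).filter
              (fun t => Nat.Coprime t (Kmod c q d ((i : ℕ) + 1)))),
            e (Rphase c q d n (Fin.cons V z))) * ((b * c : ℕ) : ℂ) := by
          rw [Finset.sum_mul]
      _ = Kl ((minv c V : ℕ) : ℤ) n c q d * ((b * c : ℕ) : ℂ) := by
          rw [sum_Rphase_cons]
      _ = ((b * c : ℕ) : ℂ) * Kl (-a) n c q d := by
          rw [Kl_congr c hc q d n ((minv c V : ℕ) : ℤ) (-a) hdvdminv]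
          ring
  · rw [if_neg hbQ]
    apply Finset.sum_eq_zero
    intro y hy
    have hy0 := Fintype.mem_piFinset.mp hy 0
    rw [show ((0 : Fin (L + 1)) : ℕ) = 0 from rfl, Kmod_zero] at hy0
    rw [Finset.mem_filter] at hy0
    rw [if_neg (no_solution c Q b hc hQ hb abar hcoab hbQc hbQ (y 0) hy0.2)]
    exact mul_zero _
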